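/- (Theorem 3, unauthorized case, rank form.) Suppose Γ is self-dual. If A ⊆ B ⊆ P with A ∉ Γ and B ∉ Γ, then rk(M_A) + rk(M_{P∖A}) ≤ rk(M_B) + rk(M_{P∖B}), where rk denotes rank over F_q. (By the entropy formula S(X) = (rk(M_X) + rk(M_{P∖X}) − rk(M))·log₂ q for unauthorized X, this expresses that the von Neumann entropy of the shares of unauthorized sets of the normal-form quantum secret sharing scheme is monotonically nondecreasing: S(A) ≤ S(B).) -/

import Mathlib

/-!
Normal-form monotone span programs (Smith's construction for quantum secret sharing).

Players are `Fin n`.  The minimal authorized sets are `A 0, …, A (k-1)`,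
distinct nonempty subsets forming an antichain whose union is all of `Fin n`.
`enum i` fixes an enumeration of the elements of `A i`; the last element
`enum i ⟨card - 1⟩` plays the role of the distinguished participant of block `i`.
-/

/-- The combinatorial data of a normal-form monotone span program. -/
structure MSP (n k : ℕ) where
  /-- the minimal authorized sets -/
  A : Fin k → Finset (Fin n)
  nonempty : ∀ i, (A i).Nonempty
  /-- antichain (this also forces the `A i` to be pairwise distinct) -/
  antichain : ∀ i j : Fin k, i ≠ j → ¬ A i ⊆ A j
  /-- every player occurs in some minimal authorized set -/
  cover : ∀ p : Fin n, ∃ i, p ∈ A i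
  /-- a fixed enumeration `p_{i,1}, …, p_{i,|A_i|}` of each `A i` -/
  enum : ∀ i, Fin ((A i).card) ≃ {p : Fin n // p ∈ A i}

namespace MSP

variable {n k : ℕ}

/-- Row indices of the span matrix: block `i` has `|A i|` rows. -/
abbrev Rows (S : MSP n k) := (i : Fin k) × Fin ((S.A i).card)

/-- Column indices: the first column (`none`) together with the blocks
`C i` of `r_i = |A i| - 1` columns (`some ⟨i, j⟩`). -/
abbrev Cols (S : MSP n k) := Option ((i : Fin k) × Fin ((S.A i).card - 1))

/-- The player labelling the rows (the map `ψ`). -/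
def label (S : MSP n k) (r : S.Rows) : Fin n := (S.enum r.1 r.2 : Fin n)

/-- The normal-form span matrix `M`.  In block `i`, row `j` with
`j < |A i| - 1` is the `j`-th identity row (a single `1` in column
`some ⟨i, j⟩`), and the last row (`j = |A i| - 1`) is
`(1, 0, …, 0, -1, …, -1)`: a `1` in column `none` and `-1` in every
column of block `i`. -/
def M (F : Type*) [Field F] (S : MSP n k) : Matrix S.Rows S.Cols F :=
  Matrix.of fun r c =>
    match c with
    | none => if (r.2 : ℕ) = (S.A r.1).card - 1 then 1 else 0
    | some ⟨i, j⟩ =>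
        if i = r.1 then
          (if (r.2 : ℕ) = (S.A r.1).card - 1 then -1
           else if (j : ℕ) = (r.2 : ℕ) then 1 else 0)
        else 0

/-- The submatrix `M_B` of `M` consisting of all rows labelled by players in `B`. -/
def MSub (F : Type*) [Field F] (S : MSP n k) (B : Finset (Fin n)) :
    Matrix {r : S.Rows // S.label r ∈ B} S.Cols F :=
  Matrix.of fun r c => M F S r.1 c

/-- The vector `ε₁ = (1, 0, …, 0)`. -/
def eps1 (F : Type*) [Field F] (S : MSP n k) : S.Cols → F :=
  fun c => match c with
  | none => 1
  | some _ => 0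

/-- The access structure computed by the program:
`B` is authorized iff it contains some minimal authorized set. -/
def auth (S : MSP n k) (B : Finset (Fin n)) : Prop := ∃ i, S.A i ⊆ B

/-- Self-duality of the access structure. -/
def selfDual (S : MSP n k) : Prop :=
  ∀ X : Finset (Fin n), S.auth X ↔ ¬ S.auth (Finset.univ \ X)

end MSP
open Module Submodule Set MSP

section RankHelpers
variable {F : Type*} [Field F] {m n ι : Type*} [Fintype m] [Fintype n] [Fintype ι]

theorem myRankLE (A : Matrix m n F) (v : ι → n → F)
    (h : ∀ r, A r ∈ span F (Set.range v)) : A.rank ≤ Fintype.card ι := by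
  rw [Matrix.rank_eq_finrank_span_row]
  refine le_trans (Submodule.finrank_mono ?_) (finrank_range_le_card v)
  exact span_le.mpr (by rintro _ ⟨r, rfl⟩; exact h r)

theorem myCardLE (A : Matrix m n F) (v : ι → n → F) (hv : LinearIndependent F v)
    (h : ∀ t, v t ∈ span F (Set.range A)) : Fintype.card ι ≤ A.rank := by
  rw [Matrix.rank_eq_finrank_span_row, ← finrank_span_eq_card hv]
  exact Submodule.finrank_mono (span_le.mpr (by rintro _ ⟨t, rfl⟩; exact h t))
end RankHelpers

namespace MSP
variable {n k : ℕ} (S : MSP n k)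

/-- the index of the last row of block `i` -/
def lastIdx (i : Fin k) : Fin ((S.A i).card) :=
  ⟨(S.A i).card - 1, Nat.sub_lt (Finset.card_pos.mpr (S.nonempty i)) one_pos⟩

def castIdx {i : Fin k} (j : Fin ((S.A i).card - 1)) : Fin ((S.A i).card) :=
  ⟨(j : ℕ), lt_of_lt_of_le j.2 (Nat.sub_le _ _)⟩

lemma castIdx_ne_lastIdx {i : Fin k} (j : Fin ((S.A i).card - 1)) :
    S.castIdx j ≠ S.lastIdx i := by
  have := j.2
  exact Fin.ne_of_val_ne (show (j:ℕ) ≠ (S.A i).card - 1 by omega)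

lemma label_mem (r : S.Rows) : S.label r ∈ S.A r.1 := (S.enum r.1 r.2).2

variable (F : Type*) [Field F]

lemma sum_col_none (G : S.Rows → F) :
    ∑ r : S.Rows, G r * M F S r none = ∑ i, G ⟨i, S.lastIdx i⟩ := by
  rw [← Finset.univ_sigma_univ, Finset.sum_sigma]
  refine Finset.sum_congr rfl fun i _ => ?_
  rw [Finset.sum_eq_single (S.lastIdx i)]
  · simp [M, lastIdx]
  · intro j _ hj
    have : (j : ℕ) ≠ (S.A i).card - 1 := fun h => hj (Fin.ext h)
    simp [M, this]
  · simp

lemma sum_col_some (G : S.Rows → F) (i : Fin k) (j : Fin ((S.A i).card - 1)) :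
    ∑ r : S.Rows, G r * M F S r (some ⟨i, j⟩)
      = G ⟨i, S.castIdx j⟩ - G ⟨i, S.lastIdx i⟩ := by
  rw [← Finset.univ_sigma_univ, Finset.sum_sigma]
  rw [Finset.sum_eq_single i]
  · rw [Finset.sum_eq_add_of_mem (S.castIdx j) (S.lastIdx i) (Finset.mem_univ _)
      (Finset.mem_univ _) (S.castIdx_ne_lastIdx j)]
    · have h1 : ((S.castIdx j : Fin ((S.A i).card)) : ℕ) ≠ (S.A i).card - 1 := by
        have := j.2; simp only [castIdx]; omega
      simp only [M, Matrix.of_apply, if_pos rfl, h1, if_false, lastIdx, if_pos rfl]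
      simp [castIdx]
      ring
    · intro j' _ hj'
      rcases hj' with ⟨hj1, hj2⟩
      have h1 : ((j' : Fin ((S.A i).card)) : ℕ) ≠ (S.A i).card - 1 := by
        intro h; exact hj2 (Fin.ext h)
      have h2 : (j : ℕ) ≠ (j' : ℕ) := by
        intro h; exact hj1 (Fin.ext h.symm)
      simp [M, h1, h2]
  · intro i' _ hi'
    apply Finset.sum_eq_zero
    intro j' _
    simp [M, hi'.symm]
  · simp

lemma sum_block (i : Fin k) :
    ∑ j : Fin ((S.A i).card), M F S ⟨i, j⟩ = eps1 F S := by
  funext c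
  have key : ∀ c', ∑ r : S.Rows, (if r.1 = i then (1:F) else 0) * M F S r c'
      = ∑ j : Fin ((S.A i).card), M F S ⟨i, j⟩ c' := by
    intro c'
    rw [← Finset.univ_sigma_univ, Finset.sum_sigma, Finset.sum_eq_single i]
    · simp
    · intro i' _ hi'; apply Finset.sum_eq_zero; intro j' _; simp [hi']
    · simp
  rw [Finset.sum_apply, ← key c]
  match c with
  | none =>
    rw [sum_col_none]
    simp [eps1]
  | some ⟨i', j⟩ =>
    rw [sum_col_some]
    simp [eps1]
end MSP
namespace MSP
variable {n k : ℕ} (S : MSP n k)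

/-- `r` is a useful row for `Y`: labelled in `Y`, and not the (redundant)
last row of a block entirely contained in `Y`. -/
def Pc (Y : Finset (Fin n)) (r : S.Rows) : Prop :=
  S.label r ∈ Y ∧ ¬((r.2 : ℕ) = (S.A r.1).card - 1 ∧ S.A r.1 ⊆ Y)

instance (Y : Finset (Fin n)) : DecidablePred (S.Pc Y) := fun r => by
  unfold Pc; infer_instance

variable (F : Type*) [Field F]

def famTwo (Y : Finset (Fin n)) : ({r : S.Rows // S.Pc Y r} ⊕ Unit) → S.Cols → F :=
  Sum.elim (fun t => M F S t.1) (fun _ => eps1 F S)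

lemma sum_subtype_mul (P : S.Rows → Prop) [DecidablePred P] (g : {r : S.Rows // P r} → F)
    (f : S.Rows → S.Cols → F) (c : S.Cols) :
    ∑ t : {r : S.Rows // P r}, g t * f t.1 c
      = ∑ r : S.Rows, (if h : P r then g ⟨r, h⟩ else 0) * f r c := by
  have h1 : ∑ r : S.Rows, (if h : P r then g ⟨r, h⟩ else 0) * f r c
      = ∑ r ∈ Finset.univ.filter P, (if h : P r then g ⟨r, h⟩ else 0) * f r c := by
    rw [Finset.sum_filter_of_ne]
    intro x _ hx
    by_contra h
    rw [dif_neg h, zero_mul] at hx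
    exact hx rfl
  rw [h1, Finset.sum_subtype (p := P) (Finset.univ.filter P) (by simp)
    (fun r => (if h : P r then g ⟨r, h⟩ else 0) * f r c)]
  exact Finset.sum_congr rfl fun t _ => by rw [dif_pos t.2]

/-- If no minimal set is contained in `Y`, pick a missing short column. -/
lemma exists_missing {Y : Finset (Fin n)} {i : Fin k} (hi : ¬ S.A i ⊆ Y)
    (hlast : S.label ⟨i, S.lastIdx i⟩ ∈ Y) :
    ∃ j : Fin ((S.A i).card - 1), S.label ⟨i, S.castIdx j⟩ ∉ Y := by
  obtain ⟨p, hpA, hpY⟩ := Finset.not_subset.mp hi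
  set j₀ := (S.enum i).symm ⟨p, hpA⟩ with hj₀
  have hlab : S.label ⟨i, j₀⟩ = p := by
    simp [label, hj₀, Equiv.apply_symm_apply]
  have hne : (j₀ : ℕ) ≠ (S.A i).card - 1 := by
    intro h
    have : j₀ = S.lastIdx i := Fin.ext h
    rw [this] at hlab
    rw [hlab] at hlast
    exact hpY hlast
  have hlt : (j₀ : ℕ) < (S.A i).card - 1 := by
    have := j₀.2; omega
  refine ⟨⟨(j₀ : ℕ), hlt⟩, ?_⟩
  have : S.castIdx (⟨(j₀ : ℕ), hlt⟩ : Fin ((S.A i).card - 1)) = j₀ := Fin.ext rfl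
  rw [this, hlab]
  exact hpY

lemma famTwo_indep (Y : Finset (Fin n)) : LinearIndependent F (S.famTwo F Y) := by
  rw [Fintype.linearIndependent_iff]
  intro g hg
  set G : S.Rows → F := fun r => if h : S.Pc Y r then g (Sum.inl ⟨r, h⟩) else 0 with hG
  have hsum : ∀ c, (∑ r : S.Rows, G r * M F S r c) + g (Sum.inr ()) * eps1 F S c = 0 := by
    intro c
    have h := congrFun hg c
    simp only [Finset.sum_apply, Pi.smul_apply, smul_eq_mul, Pi.zero_apply,
      Fintype.sum_sum_type, famTwo, Sum.elim_inl, Sum.elim_inr, Finset.univ_unique,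
      Finset.sum_singleton] at h
    rw [← h]
    exact congrArg (fun x => x + g (Sum.inr ()) * eps1 F S c)
      (sum_subtype_mul S F (S.Pc Y) (fun t => g (Sum.inl t)) (fun r c => M F S r c) c).symm
  have hlast : ∀ i, G ⟨i, S.lastIdx i⟩ = 0 := by
    intro i
    by_cases hP : S.Pc Y ⟨i, S.lastIdx i⟩
    · have hAi : ¬ S.A i ⊆ Y := fun hsub => hP.2 ⟨rfl, hsub⟩
      obtain ⟨j₀, hj₀⟩ := S.exists_missing hAi hP.1
      have h := hsum (some ⟨i, j₀⟩)
      rw [sum_col_some] at h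
      have hcast : G ⟨i, S.castIdx j₀⟩ = 0 := dif_neg (fun hc => hj₀ hc.1)
      have heps : eps1 F S (some ⟨i, j₀⟩) = (0:F) := rfl
      rw [hcast, heps, mul_zero, add_zero, zero_sub, neg_eq_zero] at h
      exact h
    · exact dif_neg hP
  have hinr : g (Sum.inr ()) = 0 := by
    have h := hsum none
    rw [sum_col_none, Finset.sum_eq_zero (fun i _ => hlast i)] at h
    have heps : eps1 F S none = (1:F) := rfl
    rw [heps, mul_one, zero_add] at h
    exact h
  intro t
  match t with
  | Sum.inr () => exact hinr
  | Sum.inl ⟨⟨i, j⟩, ht⟩ =>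
    have hgt : G ⟨i, j⟩ = g (Sum.inl ⟨⟨i, j⟩, ht⟩) := dif_pos ht
    rw [← hgt]
    by_cases hj : j = S.lastIdx i
    · rw [hj]; exact hlast i
    · have hne : (j : ℕ) ≠ (S.A i).card - 1 := fun h => hj (Fin.ext h)
      have hlt : (j : ℕ) < (S.A i).card - 1 := by have := j.2; omega
      have h := hsum (some ⟨i, ⟨(j : ℕ), hlt⟩⟩)
      rw [sum_col_some] at h
      have hci : S.castIdx (⟨(j : ℕ), hlt⟩ : Fin ((S.A i).card - 1)) = j := Fin.ext rfl
      have heps : eps1 F S (some ⟨i, ⟨(j : ℕ), hlt⟩⟩) = (0:F) := rfl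
      rw [hci, hlast i, sub_zero, heps, mul_zero, add_zero] at h
      exact h
end MSP
namespace MSP
variable {n k : ℕ} (S : MSP n k) (F : Type*) [Field F]

lemma unauth_indep {X : Finset (Fin n)} (hX : ¬ S.auth X) :
    LinearIndependent F (MSub F S X) := by
  refine (Fintype.linearIndependent_iff (v := fun r => MSub F S X r)).mpr ?_
  intro g hg
  set G : S.Rows → F := fun r => if h : S.label r ∈ X then g ⟨r, h⟩ else 0 with hG
  have hsum : ∀ c, ∑ r : S.Rows, G r * M F S r c = 0 := by
    intro c
    have h := congrFun hg c
    simp only [Finset.sum_apply, Pi.smul_apply, smul_eq_mul, Pi.zero_apply] at h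
    rw [← h]
    simp only [MSub, Matrix.of_apply]
    exact (sum_subtype_mul S F (fun r => S.label r ∈ X) g (fun r c => M F S r c) c).symm
  have hlast : ∀ i, G ⟨i, S.lastIdx i⟩ = 0 := by
    intro i
    by_cases hP : S.label ⟨i, S.lastIdx i⟩ ∈ X
    · have hAi : ¬ S.A i ⊆ X := fun hsub => hX ⟨i, hsub⟩
      obtain ⟨j₀, hj₀⟩ := S.exists_missing hAi hP
      have h := hsum (some ⟨i, j₀⟩)
      rw [sum_col_some] at h
      have hcast : G ⟨i, S.castIdx j₀⟩ = 0 := dif_neg hj₀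
      rw [hcast, zero_sub, neg_eq_zero] at h
      exact h
    · exact dif_neg hP
  rintro ⟨⟨i, j⟩, ht⟩
  have hgt : G ⟨i, j⟩ = g ⟨⟨i, j⟩, ht⟩ := dif_pos ht
  rw [← hgt]
  by_cases hj : j = S.lastIdx i
  · rw [hj]; exact hlast i
  · have hne : (j : ℕ) ≠ (S.A i).card - 1 := fun h => hj (Fin.ext h)
    have hlt : (j : ℕ) < (S.A i).card - 1 := by have := j.2; omega
    have h := hsum (some ⟨i, ⟨(j : ℕ), hlt⟩⟩)
    rw [sum_col_some] at h
    have hci : S.castIdx (⟨(j : ℕ), hlt⟩ : Fin ((S.A i).card - 1)) = j := Fin.ext rfl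
    rw [hci, hlast i, sub_zero] at h
    exact h

lemma eps1_mem {Y : Finset (Fin n)} (hY : S.auth Y) :
    eps1 F S ∈ Submodule.span F (Set.range (MSub F S Y)) := by
  obtain ⟨i₀, h⟩ := hY
  rw [← sum_block S F i₀]
  apply Submodule.sum_mem
  intro j _
  exact Submodule.subset_span ⟨⟨⟨i₀, j⟩, h (S.label_mem ⟨i₀, j⟩)⟩, rfl⟩

lemma famTwo_mem {Y : Finset (Fin n)} (hY : S.auth Y) (t : {r : S.Rows // S.Pc Y r} ⊕ Unit) :
    S.famTwo F Y t ∈ Submodule.span F (Set.range (MSub F S Y)) := by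
  match t with
  | Sum.inl t => exact Submodule.subset_span ⟨⟨t.1, t.2.1⟩, rfl⟩
  | Sum.inr () => exact S.eps1_mem F hY

lemma rows_mem_famTwo (Y : Finset (Fin n)) (t : {r : S.Rows // S.label r ∈ Y}) :
    MSub F S Y t ∈ Submodule.span F (Set.range (S.famTwo F Y)) := by
  obtain ⟨⟨i, j⟩, ht⟩ := t
  by_cases hP : S.Pc Y ⟨i, j⟩
  · exact Submodule.subset_span ⟨Sum.inl ⟨⟨i, j⟩, hP⟩, rfl⟩
  · have hfull : (j : ℕ) = (S.A i).card - 1 ∧ S.A i ⊆ Y := by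
      by_contra h; exact hP ⟨ht, h⟩
    have hj : j = S.lastIdx i := Fin.ext hfull.1
    have hsplit : M F S ⟨i, S.lastIdx i⟩
        + ∑ j' ∈ Finset.univ.erase (S.lastIdx i), M F S ⟨i, j'⟩ = eps1 F S := by
      rw [← sum_block S F i]
      exact Finset.add_sum_erase Finset.univ (fun j' => M F S ⟨i, j'⟩) (Finset.mem_univ (S.lastIdx i))
    have heq : MSub F S Y ⟨⟨i, j⟩, ht⟩
        = eps1 F S - ∑ j' ∈ Finset.univ.erase (S.lastIdx i), M F S ⟨i, j'⟩ := by
      have h0 : MSub F S Y ⟨⟨i, j⟩, ht⟩ = M F S ⟨i, S.lastIdx i⟩ := by rw [← hj]; rfl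
      rw [h0, eq_sub_iff_add_eq]
      exact hsplit
    rw [heq]
    apply Submodule.sub_mem
    · exact Submodule.subset_span ⟨Sum.inr (), rfl⟩
    · apply Submodule.sum_mem
      intro j' hj'
      have hne := Finset.ne_of_mem_erase hj'
      have hPc : S.Pc Y ⟨i, j'⟩ :=
        ⟨hfull.2 (S.label_mem ⟨i, j'⟩), fun hc => hne (Fin.ext hc.1)⟩
      exact Submodule.subset_span ⟨Sum.inl ⟨⟨i, j'⟩, hPc⟩, rfl⟩
end MSP
namespace MSP
variable {n k : ℕ} (S : MSP n k) (F : Type*) [Field F]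

lemma rank_unauth {X : Finset (Fin n)} (hX : ¬ S.auth X) :
    (MSub F S X).rank = Fintype.card {r : S.Rows // S.label r ∈ X} :=
  (S.unauth_indep F hX).rank_matrix

lemma rank_le_pc (Y : Finset (Fin n)) :
    (MSub F S Y).rank ≤ Fintype.card {r : S.Rows // S.Pc Y r} + 1 := by
  have h := myRankLE (MSub F S Y) (S.famTwo F Y) (S.rows_mem_famTwo F Y)
  simpa [Fintype.card_sum] using h

lemma pc_le_rank {Y : Finset (Fin n)} (hY : S.auth Y) :
    Fintype.card {r : S.Rows // S.Pc Y r} + 1 ≤ (MSub F S Y).rank := by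
  have h := myCardLE (MSub F S Y) (S.famTwo F Y) (S.famTwo_indep F Y) (S.famTwo_mem F hY)
  simpa [Fintype.card_sum] using h

lemma card_partition (X : Finset (Fin n)) :
    Fintype.card {r : S.Rows // S.label r ∈ X}
      + Fintype.card {r : S.Rows // S.Pc (Finset.univ \ X) r}
      + Fintype.card {r : S.Rows //
          (r.2 : ℕ) = (S.A r.1).card - 1 ∧ S.A r.1 ⊆ Finset.univ \ X}
      = Fintype.card S.Rows := by
  classical
  rw [Fintype.card_subtype, Fintype.card_subtype, Fintype.card_subtype, ← Finset.card_univ,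
    Finset.card_filter, Finset.card_filter, Finset.card_filter, ← Finset.sum_add_distrib,
    ← Finset.sum_add_distrib, Finset.card_eq_sum_ones]
  refine Finset.sum_congr rfl fun r _ => ?_
  by_cases h1 : S.label r ∈ X
  · have h2 : ¬ S.Pc (Finset.univ \ X) r := fun hp =>
      (Finset.mem_sdiff.mp hp.1).2 h1
    have h3 : ¬((r.2 : ℕ) = (S.A r.1).card - 1 ∧ S.A r.1 ⊆ Finset.univ \ X) := fun hf =>
      (Finset.mem_sdiff.mp (hf.2 (S.label_mem r))).2 h1
    simp [h1, h2, h3]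
  · have hY : S.label r ∈ Finset.univ \ X := Finset.mem_sdiff.mpr ⟨Finset.mem_univ _, h1⟩
    by_cases h2 : (r.2 : ℕ) = (S.A r.1).card - 1 ∧ S.A r.1 ⊆ Finset.univ \ X
    · have h3 : ¬ S.Pc (Finset.univ \ X) r := fun hp => hp.2 h2
      simp [h1, h2, h3]
    · have h3 : S.Pc (Finset.univ \ X) r := ⟨hY, h2⟩
      simp [h1, h2, h3]
end MSP

open MSP

/-- `f(X) = rk(M_X) + rk(M_{P∖X})`, the rank functional governing the entropy
of the normal-form secret sharing state. -/
noncomputable def MSP.rkPair (F : Type*) [Field F] {n k : ℕ} (S : MSP n k) (X : Finset (Fin n)) : ℕ :=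
  (MSub F S X).rank + (MSub F S (Finset.univ \ X)).rank

/-- Theorem 3, unauthorized case, rank form.  Suppose `Γ` is
self-dual.  If `A ⊆ B ⊆ P` are both unauthorized, then
`rk(M_A) + rk(M_{P∖A}) ≤ rk(M_B) + rk(M_{P∖B})`.  Via the entropy formula
`S(X) = (rk(M_X) + rk(M_{P∖X}) − rk M)·log₂ q` for unauthorized `X`, this says
the von Neumann entropy of unauthorized sets is monotonically nondecreasing. -/
theorem entropy_monotone_unauthorized {F : Type*} [Field F] [Fintype F] {n k : ℕ}
    (S : MSP n k) (hsd : S.selfDual) (A B : Finset (Fin n)) (hAB : A ⊆ B)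
    (hA : ¬ S.auth A) (hB : ¬ S.auth B) :
    S.rkPair F A ≤ S.rkPair F B := by
  classical
  have hYA : S.auth (Finset.univ \ A) := by
    by_contra h
    exact hA ((hsd A).mpr h)
  have hYB : S.auth (Finset.univ \ B) := by
    by_contra h
    exact hB ((hsd B).mpr h)
  -- upper bound for A
  have hA1 : (MSub F S A).rank ≤ Fintype.card {r : S.Rows // S.label r ∈ A} :=
    Matrix.rank_le_card_height _
  have hA2 := S.rank_le_pc F (Finset.univ \ A)
  -- lower bound for B
  have hB1 : (MSub F S B).rank = Fintype.card {r : S.Rows // S.label r ∈ B} :=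
    S.rank_unauth F hB
  have hB2 := S.pc_le_rank F hYB
  -- counting
  have hpA := S.card_partition A
  have hpB := S.card_partition B
  have hmono : Fintype.card {r : S.Rows //
        (r.2 : ℕ) = (S.A r.1).card - 1 ∧ S.A r.1 ⊆ Finset.univ \ B}
      ≤ Fintype.card {r : S.Rows //
        (r.2 : ℕ) = (S.A r.1).card - 1 ∧ S.A r.1 ⊆ Finset.univ \ A} := by
    apply Fintype.card_subtype_mono
    intro r hr
    exact ⟨hr.1, hr.2.trans (Finset.sdiff_subset_sdiff (le_refl _) hAB)⟩
  unfold MSP.rkPair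
  omega
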